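/- Let γ > 0 and let q ∈ L¹(ℝ;ℂ) with supp q ⊆ [0,γ]. If r > 0 satisfies 4rγ/π + ‖q‖₁ < log 2, where ‖q‖₁ = ∫_ℝ |q(x)| dx, then the function a has no zeros of modulus at most r; in particular, the Dirac operator H has no resonances in the disk {λ : |λ| ≤ r}. -/

import Mathlib

open MeasureTheory Complex Real

/-- The `n`-th simplex integral `a_n(λ)` in the iteration series for the inverse
transmission coefficient of the 1D massless Dirac operator with potential `q`. -/
noncomputable def aCoeff (γ : ℝ) (q : ℝ → ℂ) (n : ℕ) (l : ℂ) : ℂ :=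
  ∫ t : Fin (2 * n) → ℝ in {t | StrictMono t ∧ ∀ i, t i ∈ Set.Ioo 0 γ},
    ∏ j : Fin n,
      q (t ⟨2 * (j : ℕ), by have := j.isLt; omega⟩) *
        (starRingEnd ℂ) (q (t ⟨2 * (j : ℕ) + 1, by have := j.isLt; omega⟩)) *
        Complex.exp (2 * Complex.I * l *
          (((t ⟨2 * (j : ℕ) + 1, by have := j.isLt; omega⟩) : ℝ)
            - (t ⟨2 * (j : ℕ), by have := j.isLt; omega⟩)))

/-- The function `a(λ) = 1 + Σ_{n≥1} a_n(λ)`, whose zeros are the resonances of the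
1D massless Dirac operator. -/
noncomputable def diracA (γ : ℝ) (q : ℝ → ℂ) (l : ℂ) : ℂ :=
  1 + ∑' n : ℕ, aCoeff γ q (n + 1) l


section DiracHelpers
open Finset


lemma prod_pair_nat {M : Type*} [CommMonoid M] (v : ℕ → M) (n : ℕ) :
    ∏ j ∈ Finset.range n, (v (2*j) * v (2*j+1)) = ∏ i ∈ Finset.range (2*n), v i := by
  induction n with
  | zero => simp
  | succ n ih =>
      rw [Finset.prod_range_succ, ih, show 2*(n+1) = 2*n+1+1 by ring,
        Finset.prod_range_succ, Finset.prod_range_succ, mul_assoc]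

lemma telescope_sum (u : ℕ → ℝ) (hu : Monotone u) (n : ℕ) :
    ∑ j ∈ Finset.range n, (u (2*j+1) - u (2*j)) ≤ u (2*n) - u 0 := by
  induction n with
  | zero => simp
  | succ n ih =>
      rw [Finset.sum_range_succ]
      have h1 : u (2*n) ≤ u (2*n+1) := hu (by omega)
      have h2 : u (2*n+1) ≤ u (2*(n+1)) := hu (by omega)
      linarith

lemma prod_pair (n : ℕ) (v : Fin (2*n) → ℝ) :
    ∏ j : Fin n, (v ⟨2*(j:ℕ), by have := j.isLt; omega⟩ *
        v ⟨2*(j:ℕ)+1, by have := j.isLt; omega⟩) = ∏ i, v i := by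
  set w : ℕ → ℝ := fun k => if h : k < 2*n then v ⟨k, h⟩ else 1 with hw
  have h1 : ∏ i : Fin (2*n), v i = ∏ i ∈ Finset.range (2*n), w i := by
    rw [← Fin.prod_univ_eq_prod_range w (2*n)]
    exact Finset.prod_congr rfl fun i _ => by simp [hw, i.isLt]
  have h2 : ∏ j : Fin n, (v ⟨2*(j:ℕ), by have := j.isLt; omega⟩ *
      v ⟨2*(j:ℕ)+1, by have := j.isLt; omega⟩)
      = ∏ j ∈ Finset.range n, (w (2*j) * w (2*j+1)) := by
    rw [← Fin.prod_univ_eq_prod_range (fun j => w (2*j) * w (2*j+1)) n]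
    refine Finset.prod_congr rfl fun j _ => ?_
    have hj1 : 2*(j:ℕ) < 2*n := by have := j.isLt; omega
    have hj2 : 2*(j:ℕ)+1 < 2*n := by have := j.isLt; omega
    simp [hw, hj1, hj2]
  rw [h1, h2, prod_pair_nat]

lemma pointwise_bound (γ : ℝ) (hγ : 0 < γ) (q : ℝ → ℂ) (r : ℝ) (hr : 0 ≤ r) (z : ℂ)
    (hz : ‖z‖ ≤ r) (n : ℕ) (hn : 0 < n) (t : Fin (2*n) → ℝ)
    (ht1 : StrictMono t) (ht2 : ∀ i, t i ∈ Set.Ioo 0 γ) :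
    ‖∏ j : Fin n,
      q (t ⟨2 * (j : ℕ), by have := j.isLt; omega⟩) *
        (starRingEnd ℂ) (q (t ⟨2 * (j : ℕ) + 1, by have := j.isLt; omega⟩)) *
        Complex.exp (2 * Complex.I * z *
          (((t ⟨2 * (j : ℕ) + 1, by have := j.isLt; omega⟩) : ℝ)
            - (t ⟨2 * (j : ℕ), by have := j.isLt; omega⟩)))‖
      ≤ Real.exp (2*r*γ) * ∏ i, ‖q (t i)‖ := by
  have hre : ∀ a b : ℝ, (2 * Complex.I * z * (((b:ℝ):ℂ) - ((a:ℝ):ℂ))).re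
      = (-2 * z.im) * (b - a) := by
    intro a b
    simp [Complex.mul_re, Complex.mul_im]
  have hnorm : ∀ j : Fin n,
      ‖q (t ⟨2 * (j : ℕ), by have := j.isLt; omega⟩) *
        (starRingEnd ℂ) (q (t ⟨2 * (j : ℕ) + 1, by have := j.isLt; omega⟩)) *
        Complex.exp (2 * Complex.I * z *
          (((t ⟨2 * (j : ℕ) + 1, by have := j.isLt; omega⟩) : ℝ)
            - (t ⟨2 * (j : ℕ), by have := j.isLt; omega⟩)))‖
      = (‖q (t ⟨2 * (j : ℕ), by have := j.isLt; omega⟩)‖ *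
          ‖q (t ⟨2 * (j : ℕ) + 1, by have := j.isLt; omega⟩)‖) *
        Real.exp ((-2 * z.im) * ((t ⟨2 * (j : ℕ) + 1, by have := j.isLt; omega⟩)
            - (t ⟨2 * (j : ℕ), by have := j.isLt; omega⟩))) := by
    intro j
    rw [norm_mul, norm_mul]
    simp only [Complex.norm_conj, Complex.norm_exp, hre]
  rw [norm_prod]
  simp only [hnorm]
  rw [Finset.prod_mul_distrib, ← Real.exp_sum]
  -- bound the exponential sum
  set Sd := ∑ j : Fin n, ((t ⟨2 * (j : ℕ) + 1, by have := j.isLt; omega⟩)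
      - (t ⟨2 * (j : ℕ), by have := j.isLt; omega⟩)) with hSd
  have hfactor : ∑ j : Fin n, (-2 * z.im) * ((t ⟨2 * (j : ℕ) + 1, by have := j.isLt; omega⟩)
      - (t ⟨2 * (j : ℕ), by have := j.isLt; omega⟩)) = (-2 * z.im) * Sd := by
    rw [hSd, Finset.mul_sum]
  have hSnn : 0 ≤ Sd := by
    apply Finset.sum_nonneg
    intro j _
    have : t ⟨2 * (j : ℕ), by have := j.isLt; omega⟩
        < t ⟨2 * (j : ℕ) + 1, by have := j.isLt; omega⟩ :=
      ht1 (by exact Fin.mk_lt_mk.2 (by omega))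
    linarith
  have hSle : Sd ≤ γ := by
    have h2n1 : 2*n-1 < 2*n := by omega
    set u : ℕ → ℝ := fun i => t ⟨min i (2*n-1), by omega⟩ with hu
    have hmono : Monotone u := by
      intro i j hij
      exact ht1.monotone (by simp only [Fin.mk_le_mk]; omega)
    have htel := telescope_sum u hmono n
    have hL : Sd = ∑ j ∈ Finset.range n, (u (2*j+1) - u (2*j)) := by
      rw [hSd, ← Fin.sum_univ_eq_sum_range (fun j => u (2*j+1) - u (2*j)) n]
      refine Finset.sum_congr rfl fun j _ => ?_
      have hj := j.isLt
      have e1 : u (2*(j:ℕ)+1) = t ⟨2*(j:ℕ)+1, by omega⟩ :=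
        congrArg t (Fin.ext (show min (2*(j:ℕ)+1) (2*n-1) = 2*(j:ℕ)+1 by omega))
      have e0 : u (2*(j:ℕ)) = t ⟨2*(j:ℕ), by omega⟩ :=
        congrArg t (Fin.ext (show min (2*(j:ℕ)) (2*n-1) = 2*(j:ℕ) by omega))
      rw [e1, e0]
    have eU : u (2*n) = t ⟨2*n-1, h2n1⟩ :=
      congrArg t (Fin.ext (show min (2*n) (2*n-1) = 2*n-1 by omega))
    have e0' : u 0 = t ⟨0, by omega⟩ :=
      congrArg t (Fin.ext (show min 0 (2*n-1) = 0 by omega))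
    have hb1 := (ht2 ⟨2*n-1, h2n1⟩).2
    have hb0 := (ht2 ⟨0, by omega⟩).1
    rw [hL]
    refine htel.trans ?_
    rw [eU, e0']
    linarith
  have him : |z.im| ≤ r := le_trans (Complex.abs_im_le_norm z) hz
  have hexp : Real.exp ((-2 * z.im) * Sd) ≤ Real.exp (2*r*γ) := by
    apply Real.exp_le_exp.2
    have h1 := abs_le.1 him
    nlinarith [mul_nonneg (by linarith [h1.1] : (0:ℝ) ≤ r + z.im) hSnn,
      mul_nonneg hr (by linarith : 0 ≤ γ - Sd)]
  rw [hfactor]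
  have hprod : ∏ j : Fin n, (‖q (t ⟨2 * (j : ℕ), by have := j.isLt; omega⟩)‖ *
      ‖q (t ⟨2 * (j : ℕ) + 1, by have := j.isLt; omega⟩)‖)
      = ∏ i, ‖q (t i)‖ := prod_pair n (fun i => ‖q (t i)‖)
  rw [hprod]
  have hpnn : 0 ≤ ∏ i, ‖q (t i)‖ :=
    Finset.prod_nonneg fun i _ => norm_nonneg _
  calc (∏ i, ‖q (t i)‖) * Real.exp ((-2*z.im) * Sd)
      ≤ (∏ i, ‖q (t i)‖) * Real.exp (2*r*γ) :=
        mul_le_mul_of_nonneg_left hexp hpnn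
    _ = Real.exp (2*r*γ) * ∏ i, ‖q (t i)‖ := mul_comm _ _

lemma measurableSet_simplex (γ : ℝ) (m : ℕ) :
    MeasurableSet {t : Fin m → ℝ | StrictMono t ∧ ∀ i, t i ∈ Set.Ioo 0 γ} := by
  have hA : MeasurableSet {t : Fin m → ℝ | StrictMono t} := by
    have : {t : Fin m → ℝ | StrictMono t}
        = ⋂ i, ⋂ j, ⋂ (_ : i < j), {t : Fin m → ℝ | t i < t j} := by
      ext t
      simp only [Set.mem_setOf_eq, Set.mem_iInter]
      exact ⟨fun h i j hij => h hij, fun h a b hab => h a b hab⟩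
    rw [this]
    exact MeasurableSet.iInter fun i => MeasurableSet.iInter fun j =>
      MeasurableSet.iInter fun _ =>
        measurableSet_lt (measurable_pi_apply i) (measurable_pi_apply j)
  have hB : MeasurableSet {t : Fin m → ℝ | ∀ i, t i ∈ Set.Ioo 0 γ} := by
    have : {t : Fin m → ℝ | ∀ i, t i ∈ Set.Ioo 0 γ}
        = ⋂ i, {t : Fin m → ℝ | t i ∈ Set.Ioo 0 γ} := by
      ext t; simp [Set.mem_iInter]
    rw [this]
    exact MeasurableSet.iInter fun i =>
      (measurable_pi_apply i) measurableSet_Ioo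
  exact hA.inter hB

lemma aCoeff_norm_le (γ : ℝ) (hγ : 0 < γ) (q : ℝ → ℂ) (hq : Integrable q)
    (r : ℝ) (hr : 0 ≤ r) (z : ℂ) (hz : ‖z‖ ≤ r) (n : ℕ) (hn : 0 < n) :
    ‖aCoeff γ q n z‖
      ≤ Real.exp (2*r*γ) * (∫ x : ℝ, ‖q x‖) ^ (2*n) := by
  set f : ℝ → ℝ := fun x => ‖q x‖ with hf
  have hfi : Integrable f := by
    have := hq.norm
    simpa [hf] using this
  have hF : Integrable (fun t : Fin (2*n) → ℝ => ∏ i, f (t i)) :=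
    Integrable.fintype_prod (f := fun _ : Fin (2*n) => f) (fun _ => hfi)
  have hFint : ∫ t : Fin (2*n) → ℝ, ∏ i, f (t i) = (∫ x : ℝ, f x) ^ (2*n) := by
    rw [integral_fintype_prod_volume_eq_pow (ι := Fin (2*n)) f, Fintype.card_fin]
  set S := {t : Fin (2*n) → ℝ | StrictMono t ∧ ∀ i, t i ∈ Set.Ioo 0 γ} with hS
  have hSm : MeasurableSet S := measurableSet_simplex γ (2*n)
  have h1 : ‖aCoeff γ q n z‖ ≤ ∫ t in S, ‖∏ j : Fin n,
      q (t ⟨2 * (j : ℕ), by have := j.isLt; omega⟩) *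
        (starRingEnd ℂ) (q (t ⟨2 * (j : ℕ) + 1, by have := j.isLt; omega⟩)) *
        Complex.exp (2 * Complex.I * z *
          (((t ⟨2 * (j : ℕ) + 1, by have := j.isLt; omega⟩) : ℝ)
            - (t ⟨2 * (j : ℕ), by have := j.isLt; omega⟩)))‖ :=
    norm_integral_le_integral_norm _
  have h2 : (∫ t in S, ‖∏ j : Fin n,
      q (t ⟨2 * (j : ℕ), by have := j.isLt; omega⟩) *
        (starRingEnd ℂ) (q (t ⟨2 * (j : ℕ) + 1, by have := j.isLt; omega⟩)) *
        Complex.exp (2 * Complex.I * z *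
          (((t ⟨2 * (j : ℕ) + 1, by have := j.isLt; omega⟩) : ℝ)
            - (t ⟨2 * (j : ℕ), by have := j.isLt; omega⟩)))‖)
      ≤ ∫ t in S, Real.exp (2*r*γ) * ∏ i, f (t i) := by
    apply integral_mono_of_nonneg
    · exact ae_of_all _ fun t => norm_nonneg _
    · exact (hF.const_mul _).restrict
    · exact (ae_restrict_iff' hSm).2
        (ae_of_all _ fun t ht => pointwise_bound γ hγ q r hr z hz n hn t ht.1 ht.2)
  have h3 : (∫ t in S, Real.exp (2*r*γ) * ∏ i, f (t i))
      ≤ Real.exp (2*r*γ) * (∫ x : ℝ, f x) ^ (2*n) := by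
    rw [integral_const_mul]
    apply mul_le_mul_of_nonneg_left _ (Real.exp_pos _).le
    rw [← hFint]
    exact setIntegral_le_integral hF
      (ae_of_all _ fun t => Finset.prod_nonneg fun i _ => norm_nonneg _)
  calc ‖aCoeff γ q n z‖ ≤ _ := h1
    _ ≤ _ := h2
    _ ≤ _ := h3

end DiracHelpers

/-- If `4rγ/π + ‖q‖₁ < log 2` then `a` has no zeros of modulus at most `r`; in
particular the Dirac operator has no resonances in the disk `{λ : |λ| ≤ r}`. -/
theorem no_resonances_in_small_disk (γ : ℝ) (hγ : 0 < γ) (q : ℝ → ℂ)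
    (hq : Integrable q) (hsupp : Function.support q ⊆ Set.Icc 0 γ)
    (r : ℝ) (hr : 0 < r)
    (hsmall : 4 * r * γ / π + (∫ x : ℝ, ‖q x‖) < Real.log 2) :
    ∀ z : ℂ, ‖z‖ ≤ r → diracA γ q z ≠ 0 := by
  intro z hz
  set Q := ∫ x : ℝ, ‖q x‖ with hQ
  set L := Real.log 2 with hLdef
  have hQ0 : 0 ≤ Q := integral_nonneg fun x => norm_nonneg _
  have hπ : π < 3.15 := Real.pi_lt_d2
  have hπ0 : (0:ℝ) < π := Real.pi_pos
  have hLlt : L < 0.6931471808 := Real.log_two_lt_d9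
  have hrγpos : 0 < 4 * r * γ / π := by positivity
  have hQlt : Q < L := by linarith
  have hQub : Q < 0.6931471808 := lt_trans hQlt hLlt
  -- bound on 2 r γ
  have hx : 2 * r * γ ≤ 1.6 * (L - Q) := by
    have h1 : 4 * r * γ / π < L - Q := by linarith
    have h2 : 4 * r * γ < (L - Q) * π := (div_lt_iff₀ hπ0).1 h1
    nlinarith
  set C := Real.exp (2 * r * γ) with hC
  -- geometric bound on terms
  have hb : ∀ n : ℕ, ‖aCoeff γ q (n + 1) z‖ ≤ C * (Q ^ 2) ^ (n + 1) := by
    intro n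
    have h := aCoeff_norm_le γ hγ q hq r hr.le z hz (n + 1) (Nat.succ_pos n)
    rwa [pow_mul] at h
  have hQ2 : Q ^ 2 < 1 := by nlinarith
  have hQ2nn : (0:ℝ) ≤ Q ^ 2 := sq_nonneg Q
  have hgeom : Summable (fun n : ℕ => C * (Q ^ 2) ^ (n + 1)) := by
    have h0 : Summable (fun n : ℕ => (Q ^ 2) ^ n) :=
      summable_geometric_of_lt_one hQ2nn hQ2
    have h1 : Summable (fun n : ℕ => (Q ^ 2) ^ n * (Q ^ 2)) := h0.mul_right _
    have h2 : Summable (fun n : ℕ => C * ((Q ^ 2) ^ n * (Q ^ 2))) := h1.mul_left _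
    refine h2.congr fun n => by ring
  have hsummable : Summable (fun n : ℕ => ‖aCoeff γ q (n + 1) z‖) :=
    Summable.of_nonneg_of_le (fun n => norm_nonneg _) hb hgeom
  have hT : ‖∑' n : ℕ, aCoeff γ q (n + 1) z‖ ≤ C * Q ^ 2 * (1 - Q ^ 2)⁻¹ := by
    have h1 : ‖∑' n : ℕ, aCoeff γ q (n + 1) z‖ ≤ ∑' n : ℕ, ‖aCoeff γ q (n + 1) z‖ :=
      norm_tsum_le_tsum_norm hsummable
    have h2 : ∑' n : ℕ, ‖aCoeff γ q (n + 1) z‖ ≤ ∑' n : ℕ, C * (Q ^ 2) ^ (n + 1) :=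
      Summable.tsum_le_tsum hb hsummable hgeom
    have h3 : ∑' n : ℕ, C * (Q ^ 2) ^ (n + 1) = C * Q ^ 2 * ∑' n : ℕ, (Q ^ 2) ^ n := by
      rw [← tsum_mul_left]
      exact tsum_congr fun n => by ring
    rw [h3, tsum_geometric_of_lt_one hQ2nn hQ2] at h2
    linarith
  -- numeric estimate : C * Q^2 * (1-Q^2)⁻¹ < 1
  have hE : C * Q ^ 2 * (1 - Q ^ 2)⁻¹ < 1 := by
    have h1mQ : 0 < 1 - Q ^ 2 := by linarith
    -- C ≤ exp(1.6 L) * exp(-(1.6 Q))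
    have e1 : C ≤ Real.exp (1.6 * L) * Real.exp (-(1.6 * Q)) := by
      rw [← Real.exp_add]
      exact Real.exp_le_exp.2 (by linarith)
    -- exp(1.6 L) ≤ 3.06
    have e4 : Real.exp (0.11) ≤ 1 / 0.89 := by
      have h := Real.add_one_le_exp (-0.11)
      have h89 : (0.89:ℝ) ≤ Real.exp (-0.11) := by linarith
      rw [show (0.11:ℝ) = -(-0.11) by norm_num, Real.exp_neg]
      rw [one_div]
      exact inv_anti₀ (by norm_num) h89
    have e3 : Real.exp (1.6 * L) ≤ 3.06 := by
      have l1 : 1.6 * L ≤ 1.11 := by linarith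
      calc Real.exp (1.6 * L) ≤ Real.exp 1.11 := Real.exp_le_exp.2 l1
        _ = Real.exp 1 * Real.exp 0.11 := by
            rw [← Real.exp_add]; norm_num
        _ ≤ 2.7182818286 * (1 / 0.89) :=
            mul_le_mul Real.exp_one_lt_d9.le e4 (Real.exp_pos _).le (by norm_num)
        _ ≤ 3.06 := by norm_num
    -- exp(-1) ≤ 0.368
    have eB : Real.exp (-1) ≤ 0.368 := by
      rw [Real.exp_neg]
      have h := Real.exp_one_gt_d9
      have : (2.7182818283:ℝ)⁻¹ ≥ (Real.exp 1)⁻¹ :=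
        inv_anti₀ (by norm_num) h.le
      have h2 : (2.7182818283:ℝ)⁻¹ ≤ 0.368 := by norm_num
      linarith
    -- key : 1.6 Q exp(-(1.6Q)) ≤ exp(-1)
    have e2 : 1.6 * Q * Real.exp (-(1.6 * Q)) ≤ Real.exp (-1) := by
      have h := Real.add_one_le_exp (1.6 * Q - 1)
      have h' : 1.6 * Q ≤ Real.exp (1.6 * Q - 1) := by linarith
      calc 1.6 * Q * Real.exp (-(1.6 * Q))
          ≤ Real.exp (1.6 * Q - 1) * Real.exp (-(1.6 * Q)) :=
            mul_le_mul_of_nonneg_right h' (Real.exp_pos _).le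
        _ = Real.exp (-1) := by rw [← Real.exp_add]; ring_nf
    have hEpos : (0:ℝ) < Real.exp (-(1.6 * Q)) := Real.exp_pos _
    -- combine : C * Q^2 ≤ 0.7038 * Q
    have key : C * Q ^ 2 ≤ 0.7038 * Q := by
      have k1 : C * Q ^ 2 ≤ (Real.exp (1.6 * L) * Real.exp (-(1.6 * Q))) * Q ^ 2 :=
        mul_le_mul_of_nonneg_right e1 (sq_nonneg Q)
      have k2 : Q * (1.6 * Q * Real.exp (-(1.6 * Q))) ≤ Q * 0.368 :=
        mul_le_mul_of_nonneg_left (e2.trans eB) hQ0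
      nlinarith [Real.exp_pos (1.6 * L), mul_le_mul_of_nonneg_right e3
        (mul_nonneg hEpos.le (sq_nonneg Q))]
    have h5 : C * Q ^ 2 < 1 - Q ^ 2 := by nlinarith
    calc C * Q ^ 2 * (1 - Q ^ 2)⁻¹ < (1 - Q ^ 2) * (1 - Q ^ 2)⁻¹ :=
        mul_lt_mul_of_pos_right h5 (inv_pos.2 h1mQ)
      _ = 1 := mul_inv_cancel₀ (ne_of_gt h1mQ)
  -- conclude
  rw [diracA]
  intro hcontra
  have h10 : ∑' n : ℕ, aCoeff γ q (n + 1) z = -1 :=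
    eq_neg_of_add_eq_zero_right hcontra
  rw [h10] at hT
  rw [norm_neg, norm_one] at hT
  linarith
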